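/- arXiv:2502.02680 — 6 statements merged into one kernel-verified Lean document; each statement's English description precedes it below -/
import Mathlib

section
/- The function c defined by c(0) = 0 and c(i) = min over 0 ≤ j < i of (max(c(j), r_i) + 2τ_{j+1}) is non-decreasing: for all i with 1 ≤ i ≤ n-1, c(i) ≤ c(i+1). -/
/-- the completion-time recurrence `c` is non-decreasing. -/
theorem stmt_0 (n : ℕ) (hn : 1 ≤ n) (r τ c : ℕ → ℝ)
    (hr0 : ∀ i, 0 ≤ r i)
    (hrmono : ∀ i, 1 ≤ i → i ≤ n → r i ≤ r (i + 1))
    (hτ0 : ∀ j, 0 ≤ τ j)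
    (hτmono : ∀ j, 1 ≤ j → j ≤ n → τ (j + 1) ≤ τ j)
    (hc0 : c 0 = 0)
    (hc : ∀ i, ∀ hi : 1 ≤ i,
      c i = (Finset.range i).inf'
        (Finset.nonempty_range_iff.mpr (Nat.one_le_iff_ne_zero.mp hi))
        (fun j => max (c j) (r i) + 2 * τ (j + 1))) :
    ∀ i, 1 ≤ i → i ≤ n - 1 → c i ≤ c (i + 1) := by
  intro i h1 h2
  rw [hc (i + 1) (by omega)]
  apply Finset.le_inf'
  intro j hj
  rw [Finset.mem_range] at hj
  rcases lt_or_eq_of_le (Nat.lt_succ_iff.mp hj) with hji | hji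
  · rw [hc i h1]
    refine le_trans (Finset.inf'_le _ (Finset.mem_range.mpr hji)) ?_
    have := hrmono i h1 (by omega)
    gcongr
  · subst hji
    have : c j ≤ max (c j) (r (j + 1)) := le_max_left _ _
    nlinarith [hτ0 (j + 1)]
end

section
/- The recurrence c(i) = min_{0 ≤ j < i}(max(c(j), r_i) + 2τ_{j+1}) equals min( r_i + 2τ_{k+1}, min_{k < j < i}(c(j) + 2τ_{j+1}) ), where k = max{ j : 0 ≤ j < i, c(j) ≤ r_i }, provided such k exists; if no j < i satisfies c(j) ≤ r_i, then c(i) = min_{0 ≤ j < i}(c(j) + 2τ_{j+1}). -/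
/-- splitting of the completion-time recurrence at
`k = max {j < i : c j ≤ rᵢ}` (when it exists; the inner minimum over the
possibly empty set `{j : k < j < i}` is taken in `EReal`, empty = `⊤`),
and the case where no `j < i` satisfies `c j ≤ rᵢ`. -/
theorem stmt_2 (r τ c : ℕ → ℝ)
    (hrmono : ∀ i, r i ≤ r (i + 1))
    (hτmono : ∀ j, τ (j + 1) ≤ τ j)
    (hc0 : c 0 = 0)
    (hc : ∀ i, ∀ hi : 1 ≤ i,
      c i = (Finset.range i).inf'
        (Finset.nonempty_range_iff.mpr (Nat.one_le_iff_ne_zero.mp hi))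
        (fun j => max (c j) (r i) + 2 * τ (j + 1)))
    (i : ℕ) (hi : 1 ≤ i) :
    (∀ k, k < i → c k ≤ r i → (∀ j, j < i → c j ≤ r i → j ≤ k) →
      (c i : EReal) =
        min ((r i + 2 * τ (k + 1) : ℝ) : EReal)
          ((Finset.Ioo k i).inf (fun j => ((c j + 2 * τ (j + 1) : ℝ) : EReal)))) ∧
    ((∀ j, j < i → r i < c j) →
      c i = (Finset.range i).inf'
        (Finset.nonempty_range_iff.mpr (Nat.one_le_iff_ne_zero.mp hi))
        (fun j => c j + 2 * τ (j + 1))) := by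
  have hτanti : Antitone τ := antitone_nat_of_succ_le hτmono
  have hne : (Finset.range i).Nonempty :=
    Finset.nonempty_range_iff.mpr (Nat.one_le_iff_ne_zero.mp hi)
  constructor
  · intro k hk hck hmax
    apply le_antisymm
    · apply le_min
      · have : c i ≤ r i + 2 * τ (k + 1) := by
          rw [hc i hi]
          have := Finset.inf'_le (fun j => max (c j) (r i) + 2 * τ (j + 1))
            (Finset.mem_range.mpr hk)
          rwa [max_eq_right hck] at this
        exact_mod_cast this
      · apply Finset.le_inf
        intro j hj
        rw [Finset.mem_Ioo] at hj
        have hji : j < i := hj.2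
        have hrc : r i < c j := by
          by_contra h
          push_neg at h
          exact absurd (hmax j hji h) (not_le.mpr hj.1)
        have : c i ≤ c j + 2 * τ (j + 1) := by
          rw [hc i hi]
          have := Finset.inf'_le (fun j => max (c j) (r i) + 2 * τ (j + 1))
            (Finset.mem_range.mpr hji)
          rwa [max_eq_left hrc.le] at this
        exact_mod_cast this
    · obtain ⟨j, hj, hcj⟩ := Finset.exists_mem_eq_inf' hne
        (fun j => max (c j) (r i) + 2 * τ (j + 1))
      rw [Finset.mem_range] at hj
      have hci : c i = max (c j) (r i) + 2 * τ (j + 1) := by rw [hc i hi, hcj]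
      rcases le_or_gt j k with hjk | hkj
      · refine le_trans (min_le_left _ _) ?_
        have : r i + 2 * τ (k + 1) ≤ max (c j) (r i) + 2 * τ (j + 1) := by
          have h1 : r i ≤ max (c j) (r i) := le_max_right _ _
          have h2 : τ (k + 1) ≤ τ (j + 1) := hτanti (by omega)
          linarith
        rw [hci]
        exact_mod_cast this
      · refine le_trans (min_le_right _ _) ?_
        have hrc : r i < c j := by
          by_contra h
          push_neg at h
          exact absurd (hmax j hj h) (not_le.mpr hkj)
        have hmem : j ∈ Finset.Ioo k i := Finset.mem_Ioo.mpr ⟨hkj, hj⟩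
        refine le_trans (Finset.inf_le hmem) ?_
        rw [hci, max_eq_left hrc.le]
  · intro hall
    rw [hc i hi]
    apply Finset.inf'_congr hne rfl
    intro j hj
    rw [max_eq_left (hall j (Finset.mem_range.mp hj)).le]
end

section
/- For the two-sided completion-time recurrence c(i,j) = min(L(i,j), R(i,j)) with c(0,0) = 0, the function c is non-decreasing in each coordinate: c(i,j) ≤ c(i+1,j) and c(i,j) ≤ c(i,j+1) for all valid i,j. -/
/-- the two-sided completion-time recurrence
`c(i,j) = min (L(i,j), R(i,j))`, `c(0,0) = 0` (with `L(0,·) = R(·,0) = ⊤` in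
`EReal`), is non-decreasing in each coordinate. -/
theorem stmt_10 (nl nr : ℕ) (hnl : 1 ≤ nl) (hnr : 1 ≤ nr)
    (rl rr τl τr : ℕ → ℝ) (c : ℕ → ℕ → ℝ) (L R : ℕ → ℕ → EReal)
    (hrl0 : ∀ i, 0 ≤ rl i) (hrr0 : ∀ i, 0 ≤ rr i)
    (hrlmono : ∀ i, rl i ≤ rl (i + 1)) (hrrmono : ∀ i, rr i ≤ rr (i + 1))
    (hτl0 : ∀ j, 0 ≤ τl j) (hτr0 : ∀ j, 0 ≤ τr j)
    (hτlmono : ∀ j, τl (j + 1) ≤ τl j) (hτrmono : ∀ j, τr (j + 1) ≤ τr j)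
    (hL0 : ∀ j, L 0 j = ⊤) (hR0 : ∀ i, R i 0 = ⊤)
    (hL : ∀ i j, ∀ hi : 1 ≤ i,
      L i j = (((Finset.range i).inf'
        (Finset.nonempty_range_iff.mpr (Nat.one_le_iff_ne_zero.mp hi))
        (fun w => max (c w j) (rl i) + 2 * τl (w + 1)) : ℝ) : EReal))
    (hR : ∀ i j, ∀ hj : 1 ≤ j,
      R i j = (((Finset.range j).inf'
        (Finset.nonempty_range_iff.mpr (Nat.one_le_iff_ne_zero.mp hj))
        (fun w => max (c i w) (rr j) + 2 * τr (w + 1)) : ℝ) : EReal))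
    (hc00 : c 0 0 = 0)
    (hc : ∀ i j, (i, j) ≠ (0, 0) → (c i j : EReal) = min (L i j) (R i j)) :
    (∀ i j, i + 1 ≤ nl → j ≤ nr → c i j ≤ c (i + 1) j) ∧
    (∀ i j, i ≤ nl → j + 1 ≤ nr → c i j ≤ c i (j + 1)) := by
  have hrl : Monotone rl := monotone_nat_of_le_succ hrlmono
  have hrr : Monotone rr := monotone_nat_of_le_succ hrrmono
  have key1 : ∀ j i, c i j ≤ c (i + 1) j := by
    intro j
    induction j using Nat.strong_induction_on with
    | _ j IH =>
      intro i
      have hne : ((i + 1 : ℕ), j) ≠ (0, 0) := by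
        simp only [ne_eq, Prod.mk.injEq, not_and]; omega
      rw [← EReal.coe_le_coe_iff, hc _ _ hne, le_min_iff]
      constructor
      · rw [hL (i + 1) j (by omega), EReal.coe_le_coe_iff]
        apply Finset.le_inf'
        intro w hw
        rw [Finset.mem_range] at hw
        rcases Nat.lt_succ_iff_lt_or_eq.mp hw with hw | hw
        · have hi : 1 ≤ i := by omega
          have h1 : (c i j : EReal) ≤ L i j :=
            (hc i j (by simp only [ne_eq, Prod.mk.injEq, not_and]; omega)).le.trans
              (min_le_left _ _)
          rw [hL i j hi, EReal.coe_le_coe_iff] at h1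
          calc c i j ≤ max (c w j) (rl i) + 2 * τl (w + 1) :=
                h1.trans (Finset.inf'_le _ (Finset.mem_range.mpr hw))
            _ ≤ max (c w j) (rl (i + 1)) + 2 * τl (w + 1) :=
                add_le_add (max_le_max le_rfl (hrl (by omega))) le_rfl
        · subst hw
          have h2 := le_max_left (c w j) (rl (w + 1))
          have h3 := hτl0 (w + 1)
          linarith
      · rcases Nat.eq_zero_or_pos j with hj | hj
        · rw [hj, hR0]; exact le_top
        · rw [hR (i + 1) j hj, EReal.coe_le_coe_iff]
          apply Finset.le_inf'
          intro w hw
          rw [Finset.mem_range] at hw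
          have h1 : (c i j : EReal) ≤ R i j :=
            (hc i j (by simp only [ne_eq, Prod.mk.injEq, not_and]; omega)).le.trans
              (min_le_right _ _)
          rw [hR i j hj, EReal.coe_le_coe_iff] at h1
          calc c i j ≤ max (c i w) (rr j) + 2 * τr (w + 1) :=
                h1.trans (Finset.inf'_le _ (Finset.mem_range.mpr hw))
            _ ≤ max (c (i + 1) w) (rr j) + 2 * τr (w + 1) :=
                add_le_add (max_le_max (IH w hw i) le_rfl) le_rfl
  have key2 : ∀ i j, c i j ≤ c i (j + 1) := by
    intro i
    induction i using Nat.strong_induction_on with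
    | _ i IH =>
      intro j
      have hne : (i, (j + 1 : ℕ)) ≠ (0, 0) := by
        simp only [ne_eq, Prod.mk.injEq, not_and]; omega
      rw [← EReal.coe_le_coe_iff, hc _ _ hne, le_min_iff]
      refine ⟨?_, ?_⟩
      · rcases Nat.eq_zero_or_pos i with hi | hi
        · rw [hi, hL0]; exact le_top
        · rw [hL i (j + 1) hi, EReal.coe_le_coe_iff]
          apply Finset.le_inf'
          intro w hw
          rw [Finset.mem_range] at hw
          have h1 : (c i j : EReal) ≤ L i j :=
            (hc i j (by simp only [ne_eq, Prod.mk.injEq, not_and]; omega)).le.trans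
              (min_le_left _ _)
          rw [hL i j hi, EReal.coe_le_coe_iff] at h1
          calc c i j ≤ max (c w j) (rl i) + 2 * τl (w + 1) :=
                h1.trans (Finset.inf'_le _ (Finset.mem_range.mpr hw))
            _ ≤ max (c w (j + 1)) (rl i) + 2 * τl (w + 1) :=
                add_le_add (max_le_max (IH w hw j) le_rfl) le_rfl
      · rw [hR i (j + 1) (by omega), EReal.coe_le_coe_iff]
        apply Finset.le_inf'
        intro w hw
        rw [Finset.mem_range] at hw
        rcases Nat.lt_succ_iff_lt_or_eq.mp hw with hw | hw
        · have hj : 1 ≤ j := by omega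
          have h1 : (c i j : EReal) ≤ R i j :=
            (hc i j (by simp only [ne_eq, Prod.mk.injEq, not_and]; omega)).le.trans
              (min_le_right _ _)
          rw [hR i j hj, EReal.coe_le_coe_iff] at h1
          calc c i j ≤ max (c i w) (rr j) + 2 * τr (w + 1) :=
                h1.trans (Finset.inf'_le _ (Finset.mem_range.mpr hw))
            _ ≤ max (c i w) (rr (j + 1)) + 2 * τr (w + 1) :=
                add_le_add (max_le_max le_rfl (hrr (by omega))) le_rfl
        · subst hw
          have h2 := le_max_left (c i w) (rr (w + 1))
          have h3 := hτr0 (w + 1)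
          linarith
  exact ⟨fun i j _ _ => key1 j i, fun i j _ _ => key2 i j⟩
end

section
/- In the two-sided recurrence, the left-side term satisfies L(i,j) = min( r_i^l + 2τ^l_{k+1}, min_{k < w < i}(c(w,j) + 2τ^l_{w+1}) ) where k = max{ w < i : c(w,j) ≤ r_i^l }, provided such k exists. -/
private lemma coe_inf'_ereal (s : Finset ℕ) (hs : s.Nonempty) (f : ℕ → ℝ) :
    ((s.inf' hs f : ℝ) : EReal) = s.inf (fun w => ((f w : ℝ) : EReal)) := by
  induction hs using Finset.Nonempty.cons_induction with
  | singleton a => simp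
  | cons a s ha hs ih =>
      rw [Finset.inf'_cons hs, Finset.inf_cons, ← ih]
      rcases le_total (f a) (s.inf' hs f) with h | h
      · rw [inf_eq_left.mpr h, inf_eq_left.mpr (by exact_mod_cast h)]
      · rw [inf_eq_right.mpr h, inf_eq_right.mpr (by exact_mod_cast h)]

/-- splitting of the left-side term `L(i,j)` at
`k = max {w < i : c(w,j) ≤ rᵢˡ}` (inner minimum over the possibly empty set
`{w : k < w < i}` taken in `EReal`, empty = `⊤`). -/
theorem stmt_11 (rl τl : ℕ → ℝ) (c : ℕ → ℕ → ℝ)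
    (hrlmono : ∀ i, rl i ≤ rl (i + 1))
    (hτlmono : ∀ w, τl (w + 1) ≤ τl w)
    (hcmono : ∀ j a b, a ≤ b → c a j ≤ c b j)
    (i j k : ℕ) (hi : 1 ≤ i)
    (hki : k < i) (hck : c k j ≤ rl i)
    (hkmax : ∀ w, w < i → c w j ≤ rl i → w ≤ k) :
    (((Finset.range i).inf'
        (Finset.nonempty_range_iff.mpr (Nat.one_le_iff_ne_zero.mp hi))
        (fun w => max (c w j) (rl i) + 2 * τl (w + 1)) : ℝ) : EReal) =
      min ((rl i + 2 * τl (k + 1) : ℝ) : EReal)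
        ((Finset.Ioo k i).inf (fun w => ((c w j + 2 * τl (w + 1) : ℝ) : EReal))) := by
  have hτanti : Antitone τl := antitone_nat_of_succ_le hτlmono
  set f : ℕ → ℝ := fun w => max (c w j) (rl i) + 2 * τl (w + 1) with hf
  set g : ℕ → EReal := fun w => ((f w : ℝ) : EReal) with hg
  have hsplit : Finset.range i = Finset.range (k + 1) ∪ Finset.Ioo k i := by
    ext w; simp only [Finset.mem_range, Finset.mem_union, Finset.mem_Ioo]; omega
  rw [coe_inf'_ereal, hsplit, Finset.inf_union]
  have h1 : (Finset.range (k + 1)).inf g = ((rl i + 2 * τl (k + 1) : ℝ) : EReal) := by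
    have hne : (Finset.range (k + 1)).Nonempty := Finset.nonempty_range_iff.mpr (by omega)
    have : (Finset.range (k + 1)).inf' hne f = rl i + 2 * τl (k + 1) := by
      apply le_antisymm
      · have hk : k ∈ Finset.range (k + 1) := by simp
        have := Finset.inf'_le f hk
        simpa [hf, max_eq_right hck, -Finset.inf'_le_iff] using this
      · apply Finset.le_inf'
        intro w hw
        simp only [Finset.mem_range, Nat.lt_succ_iff] at hw
        have h1 : rl i ≤ max (c w j) (rl i) := le_max_right _ _
        have h2 : τl (k + 1) ≤ τl (w + 1) := hτanti (by omega)
        simp only [hf]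
        nlinarith
    rw [← this, coe_inf'_ereal]
  have h2 : (Finset.Ioo k i).inf g
      = (Finset.Ioo k i).inf (fun w => ((c w j + 2 * τl (w + 1) : ℝ) : EReal)) := by
    apply Finset.inf_congr rfl
    intro w hw
    simp only [Finset.mem_Ioo] at hw
    have : rl i ≤ c w j := by
      by_contra h
      exact absurd (hkmax w hw.2 (le_of_not_ge h)) (by omega)
    simp [hg, hf, max_eq_left this]
  rw [h1, h2]
end

section
/- The distance recurrence λ is non-decreasing in i: if τ is non-increasing and nonnegative and all feasible sets are nonempty, then λ(i) ≤ λ(i+1) for all 1 ≤ i ≤ n. -/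
/-- the distance recurrence `λ` is non-decreasing in `i`. -/
theorem stmt_12 (n : ℕ) (hn : 1 ≤ n) (D : ℝ) (r τ lam : ℕ → ℝ)
    (hτmono : ∀ i, τ (i + 1) ≤ τ i)
    (hτ0 : ∀ i, 0 ≤ τ i)
    (hbase : lam (n + 1) = D)
    (hne : ∀ i, 1 ≤ i → i ≤ n →
      ((Finset.Ioc i (n + 1)).filter
        (fun j => r (j - 1) ≤ lam j - 2 * τ i)).Nonempty)
    (hrec : ∀ i, ∀ h1 : 1 ≤ i, ∀ h2 : i ≤ n,
      lam i = ((Finset.Ioc i (n + 1)).filter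
        (fun j => r (j - 1) ≤ lam j - 2 * τ i)).sup' (hne i h1 h2)
          (fun j => lam j - 2 * τ i)) :
    ∀ i, 1 ≤ i → i ≤ n → lam i ≤ lam (i + 1) := by
  intro i h1 h2
  obtain ⟨j, hjmem, hjeq⟩ := Finset.exists_mem_eq_sup'
    (hne i h1 h2) (fun j => lam j - 2 * τ i)
  rw [Finset.mem_filter, Finset.mem_Ioc] at hjmem
  obtain ⟨⟨hij, hjn⟩, hr⟩ := hjmem
  have hlami : lam i = lam j - 2 * τ i := by rw [hrec i h1 h2, hjeq]
  rcases eq_or_lt_of_le (Nat.succ_le_of_lt hij) with heq | hlt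
  · rw [hlami, ← heq]
    have := hτ0 i
    linarith
  · -- j > i+1, so i+1 ≤ n and j is feasible for i+1
    have h2' : i + 1 ≤ n := by omega
    have hτle : τ (i + 1) ≤ τ i := hτmono i
    have hjfeas : j ∈ (Finset.Ioc (i+1) (n + 1)).filter
        (fun j => r (j - 1) ≤ lam j - 2 * τ (i+1)) := by
      rw [Finset.mem_filter, Finset.mem_Ioc]
      exact ⟨⟨hlt, hjn⟩, by linarith⟩
    have := Finset.le_sup' (fun j => lam j - 2 * τ (i+1)) hjfeas
    rw [← hrec (i+1) (by omega) h2'] at this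
    
    linarith
end

section
/- In the two-sided distance recurrence with depot anywhere on the path, λ(i,j) ≤ λ(i+1,j) and λ(i,j) ≤ λ(i,j+1) whenever all feasible sets involved are nonempty and τ^l, τ^r are non-increasing and nonnegative. -/
lemma stmt_18_aux (nl nr : ℕ) (rl rr τl τr : ℕ → ℝ) (lam : ℕ → ℕ → ℝ)
    (hτl0 : ∀ i, 0 ≤ τl i)
    (hτlmono : ∀ i, τl (i + 1) ≤ τl i)
    (hrec : ∀ i j, 1 ≤ i → i ≤ nl + 1 → 1 ≤ j → j ≤ nr + 1 →
      (i, j) ≠ (nl + 1, nr + 1) →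
      (lam i j : EReal) =
        max
          (((Finset.Ioc i (nl + 1)).filter
              (fun w => rl (w - 1) ≤ lam w j - 2 * τl i)).sup
            (fun w => ((lam w j - 2 * τl i : ℝ) : EReal)))
          (((Finset.Ioc j (nr + 1)).filter
              (fun w => rr (w - 1) ≤ lam i w - 2 * τr j)).sup
            (fun w => ((lam i w - 2 * τr j : ℝ) : EReal)))) :
    ∀ i j, 1 ≤ i → i ≤ nl → 1 ≤ j → j ≤ nr + 1 → lam i j ≤ lam (i + 1) j := by
  intro i j hi1 hinl
  have H : ∀ k j, 1 ≤ j → j ≤ nr + 1 → nr + 1 - j ≤ k → lam i j ≤ lam (i + 1) j := by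
    intro k
    induction k using Nat.strong_induction_on with
    | _ k IH =>
      intro j hj1 hjnr hk
      have hrec1 := hrec i j hi1 (by omega) hj1 hjnr
        (by simp only [ne_eq, Prod.mk.injEq, not_and]; omega)
      have key : (lam i j : EReal) ≤ (lam (i + 1) j : EReal) := by
        rw [hrec1]
        apply max_le
        · apply Finset.sup_le
          intro w hw
          simp only [Finset.mem_filter, Finset.mem_Ioc] at hw
          obtain ⟨⟨hwi, hwle⟩, hfeas⟩ := hw
          rcases eq_or_lt_of_le (Nat.succ_le_of_lt hwi) with he | hlt
          · rw [← he]
            exact_mod_cast EReal.coe_le_coe_iff.mpr (by linarith [hτl0 i])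
          · have hrec2 := hrec (i + 1) j (by omega) (by omega) hj1 hjnr
              (by simp only [ne_eq, Prod.mk.injEq, not_and]; omega)
            rw [hrec2]
            refine le_trans ?_ (le_max_left _ _)
            have hmem : w ∈ (Finset.Ioc (i + 1) (nl + 1)).filter
                (fun w => rl (w - 1) ≤ lam w j - 2 * τl (i + 1)) := by
              simp only [Finset.mem_filter, Finset.mem_Ioc]
              exact ⟨⟨hlt, hwle⟩, by linarith [hτlmono i]⟩
            refine le_trans ?_ (Finset.le_sup (f := fun w => ((lam w j - 2 * τl (i + 1) : ℝ) : EReal)) hmem)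
            exact EReal.coe_le_coe_iff.mpr (by linarith [hτlmono i])
        · apply Finset.sup_le
          intro w hw
          simp only [Finset.mem_filter, Finset.mem_Ioc] at hw
          obtain ⟨⟨hwj, hwle⟩, hfeas⟩ := hw
          have hih : lam i w ≤ lam (i + 1) w :=
            IH (nr + 1 - w) (by omega) w (by omega) hwle (by omega)
          have hrec2 := hrec (i + 1) j (by omega) (by omega) hj1 hjnr
            (by simp only [ne_eq, Prod.mk.injEq, not_and]; omega)
          rw [hrec2]
          refine le_trans ?_ (le_max_right _ _)
          have hmem : w ∈ (Finset.Ioc j (nr + 1)).filter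
              (fun w => rr (w - 1) ≤ lam (i + 1) w - 2 * τr j) := by
            simp only [Finset.mem_filter, Finset.mem_Ioc]
            exact ⟨⟨hwj, hwle⟩, by linarith⟩
          refine le_trans ?_ (Finset.le_sup (f := fun w => ((lam (i + 1) w - 2 * τr j : ℝ) : EReal)) hmem)
          exact EReal.coe_le_coe_iff.mpr (by linarith)
      exact_mod_cast key
  intro hj1 hjnr
  exact H (nr + 1 - j) j hj1 hjnr le_rfl


/-- the two-sided distance recurrence
`λ(i,j) = max (L(i,j), R(i,j))` with base `λ(n_l+1, n_r+1) = D`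
(`L`, `R` computed as `EReal` suprema over the feasible sets, which are
automatically empty—hence omitted—when `i = n_l+1` resp. `j = n_r+1`)
is non-decreasing in each coordinate. -/
theorem stmt_18 (nl nr : ℕ) (hnl : 1 ≤ nl) (hnr : 1 ≤ nr) (D : ℝ)
    (rl rr τl τr : ℕ → ℝ) (lam : ℕ → ℕ → ℝ)
    (hτl0 : ∀ i, 0 ≤ τl i) (hτr0 : ∀ i, 0 ≤ τr i)
    (hτlmono : ∀ i, τl (i + 1) ≤ τl i) (hτrmono : ∀ i, τr (i + 1) ≤ τr i)
    (hbase : lam (nl + 1) (nr + 1) = D)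
    (hne : ∀ i j, 1 ≤ i → i ≤ nl + 1 → 1 ≤ j → j ≤ nr + 1 →
      (i, j) ≠ (nl + 1, nr + 1) →
      ((Finset.Ioc i (nl + 1)).filter
          (fun w => rl (w - 1) ≤ lam w j - 2 * τl i)).Nonempty ∨
      ((Finset.Ioc j (nr + 1)).filter
          (fun w => rr (w - 1) ≤ lam i w - 2 * τr j)).Nonempty)
    (hrec : ∀ i j, 1 ≤ i → i ≤ nl + 1 → 1 ≤ j → j ≤ nr + 1 →
      (i, j) ≠ (nl + 1, nr + 1) →
      (lam i j : EReal) =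
        max
          (((Finset.Ioc i (nl + 1)).filter
              (fun w => rl (w - 1) ≤ lam w j - 2 * τl i)).sup
            (fun w => ((lam w j - 2 * τl i : ℝ) : EReal)))
          (((Finset.Ioc j (nr + 1)).filter
              (fun w => rr (w - 1) ≤ lam i w - 2 * τr j)).sup
            (fun w => ((lam i w - 2 * τr j : ℝ) : EReal)))) :
    (∀ i j, 1 ≤ i → i ≤ nl → 1 ≤ j → j ≤ nr + 1 → lam i j ≤ lam (i + 1) j) ∧
    (∀ i j, 1 ≤ i → i ≤ nl + 1 → 1 ≤ j → j ≤ nr → lam i j ≤ lam i (j + 1)) := by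
  constructor
  · exact stmt_18_aux nl nr rl rr τl τr lam hτl0 hτlmono hrec
  · intro i j hi1 hinl hj1 hjnr
    exact stmt_18_aux nr nl rr rl τr τl (fun a b => lam b a) hτr0 hτrmono
      (fun a b ha1 ha hb1 hb hne' =>
        (hrec b a hb1 hb ha1 ha
          (by simp only [ne_eq, Prod.mk.injEq, not_and] at hne' ⊢; tauto)).trans
          (max_comm _ _))
      j i hj1 hjnr hi1 hinl
end
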